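/- Jet evaluation is jointly locally Lipschitz: ‖σ̃⊙ξ̃ − σ⊙ξ‖ ≤ ‖σ̃ − σ‖(k + ‖ξ̃‖) + ‖ξ̃ − ξ‖(1 + ‖σ‖), for k-jets σ, σ̃ from E to F and tangent vectors ξ, ξ̃ ∈ E × E. -/

import Mathlib

section aux
variable {G H : Type*} [NormedAddCommGroup G] [NormedSpace ℝ G]
  [NormedAddCommGroup H] [NormedSpace ℝ H]

lemma aux_snoc_sub {n : ℕ} (f : ContinuousMultilinearMap ℝ (fun _ : Fin (n+1) => G) H)
    (w : Fin n → G) (a b : G) :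
    f (Fin.snoc w a) - f (Fin.snoc w b) = f (Fin.snoc w (a - b)) := by
  have h := f.map_update_sub (Fin.snoc w a) (Fin.last n) a b
  simpa [Fin.update_snoc_last] using h.symm

lemma aux_one_sub (f : ContinuousMultilinearMap ℝ (fun _ : Fin 1 => G) H) (a b : G) :
    f (fun _ => a) - f (fun _ => b) = f (fun _ => a - b) := by
  have hu : ∀ (c z : G), Function.update (fun _ : Fin 1 => c) 0 z = fun _ => z := by
    intro c z; funext i; rw [Subsingleton.elim i 0]; simp
  have h := f.map_update_sub (fun _ => a) 0 a b
  rw [hu, hu, hu] at h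
  exact h.symm

lemma aux_prod_snoc {n : ℕ} (w : Fin n → G) (z : G) :
    (∏ i : Fin (n+1), ‖(Fin.snoc w z : Fin (n+1) → G) i‖) = (∏ i, ‖w i‖) * ‖z‖ := by
  have h2 : (fun i : Fin (n+1) => ‖(Fin.snoc w z : Fin (n+1) → G) i‖)
      = Fin.snoc (α := fun _ : Fin (n+1) => ℝ) (fun i => ‖w i‖) ‖z‖ :=
    Fin.comp_snoc norm w z
  rw [show (∏ i : Fin (n+1), ‖(Fin.snoc w z : Fin (n+1) → G) i‖)
      = ∏ i : Fin (n+1), Fin.snoc (α := fun _ : Fin (n+1) => ℝ) (fun i => ‖w i‖) ‖z‖ i from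
    Finset.prod_congr rfl fun i _ => congrFun h2 i]
  exact Fin.prod_snoc _ _

end aux

theorem stmt_9 {E F : Type*} [NormedAddCommGroup E] [NormedSpace ℝ E]
    [NormedAddCommGroup F] [NormedSpace ℝ F]
    (k : ℕ) (hk : 1 ≤ k) (x X x' X' : E) (y y' : F)
    (p p' : FormalMultilinearSeries ℝ E F)
    (hp0 : p 0 = 0) (hpk : ∀ n, k < n → p n = 0)
    (hp'0 : p' 0 = 0) (hp'k : ∀ n, k < n → p' n = 0)
    (ηH ηV ηH' ηV' : FormalMultilinearSeries ℝ (E × E) F)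
    (hH : ∀ j, 1 ≤ j → j ≤ k - 1 → ∀ v : Fin j → E × E,
      ηH j v = p j (fun i => (v i).1))
    (hV : ∀ j, 1 ≤ j → j ≤ k - 1 → ∀ v : Fin j → E × E,
      ηV j v = p (j + 1) (Fin.snoc (fun i => (v i).1) X)
        + (j : ℝ) • p j (fun i => if (i : ℕ) = j - 1 then (v i).2 else (v i).1))
    (hH' : ∀ j, 1 ≤ j → j ≤ k - 1 → ∀ v : Fin j → E × E,
      ηH' j v = p' j (fun i => (v i).1))
    (hV' : ∀ j, 1 ≤ j → j ≤ k - 1 → ∀ v : Fin j → E × E,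
      ηV' j v = p' (j + 1) (Fin.snoc (fun i => (v i).1) X')
        + (j : ℝ) • p' j (fun i => if (i : ℕ) = j - 1 then (v i).2 else (v i).1)) :
    ‖x' - x‖ + ‖X' - X‖ + (‖y' - y‖ + ‖p' 1 (fun _ => X') - p 1 (fun _ => X)‖)
        + ∑ j ∈ Finset.Icc 1 (k - 1), (‖ηH' j - ηH j‖ + ‖ηV' j - ηV j‖) ≤
      (‖x' - x‖ + ‖y' - y‖ + ∑ j ∈ Finset.Icc 1 k, ‖p' j - p j‖) * ((k : ℝ) + (‖x'‖ + ‖X'‖))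
        + (‖x' - x‖ + ‖X' - X‖) * (1 + (‖x‖ + ‖y‖ + ∑ j ∈ Finset.Icc 1 k, ‖p j‖)) := by
  -- step 1 : degree-1 term
  have h1 : ‖p' 1 (fun _ => X') - p 1 (fun _ => X)‖
      ≤ ‖p' 1 - p 1‖ * ‖X'‖ + ‖p 1‖ * ‖X' - X‖ := by
    have e : p' 1 (fun _ => X') - p 1 (fun _ => X)
        = (p' 1 - p 1) (fun _ => X') + p 1 (fun _ => X' - X) := by
      rw [ContinuousMultilinearMap.sub_apply, ← aux_one_sub]
      abel
    rw [e]
    refine (norm_add_le _ _).trans (add_le_add ?_ ?_)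
    · simpa using (p' 1 - p 1).le_opNorm (fun _ => X')
    · simpa using (p 1).le_opNorm (fun _ => X' - X)
  -- step 2 : componentwise bounds
  have hHb : ∀ j ∈ Finset.Icc 1 (k-1), ‖ηH' j - ηH j‖ ≤ ‖p' j - p j‖ := by
    intro j hj
    rw [Finset.mem_Icc] at hj
    refine ContinuousMultilinearMap.opNorm_le_bound (norm_nonneg _) (fun v => ?_)
    rw [ContinuousMultilinearMap.sub_apply, hH' j hj.1 hj.2 v, hH j hj.1 hj.2 v,
      ← ContinuousMultilinearMap.sub_apply]
    refine ((p' j - p j).le_opNorm _).trans ?_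
    refine mul_le_mul_of_nonneg_left ?_ (norm_nonneg _)
    exact Finset.prod_le_prod (fun i _ => norm_nonneg _) (fun i _ => norm_fst_le _)
  have hVb : ∀ j ∈ Finset.Icc 1 (k-1), ‖ηV' j - ηV j‖
      ≤ ‖p' (j+1) - p (j+1)‖ * ‖X'‖ + ‖p (j+1)‖ * ‖X' - X‖ + (j:ℝ) * ‖p' j - p j‖ := by
    intro j hj
    rw [Finset.mem_Icc] at hj
    refine ContinuousMultilinearMap.opNorm_le_bound (by positivity) (fun v => ?_)
    set w : Fin j → E := fun i => (v i).1 with hw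
    set u : Fin j → E := fun i => if (i:ℕ) = j - 1 then (v i).2 else (v i).1 with hu
    have e : (ηV' j - ηV j) v
        = ((p' (j+1) - p (j+1)) (Fin.snoc w X') + p (j+1) (Fin.snoc w (X' - X)))
          + (j:ℝ) • ((p' j - p j) u) := by
      rw [ContinuousMultilinearMap.sub_apply, hV' j hj.1 hj.2 v, hV j hj.1 hj.2 v,
        ContinuousMultilinearMap.sub_apply, ContinuousMultilinearMap.sub_apply,
        ← aux_snoc_sub, smul_sub]
      abel
    have hPv : ∀ i, ‖w i‖ ≤ ‖v i‖ := fun i => norm_fst_le _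
    have hUv : ∀ i, ‖u i‖ ≤ ‖v i‖ := by
      intro i
      rw [hu]
      dsimp only
      split
      · exact norm_snd_le _
      · exact norm_fst_le _
    have hPw : (∏ i, ‖w i‖) ≤ ∏ i, ‖v i‖ :=
      Finset.prod_le_prod (fun i _ => norm_nonneg _) (fun i _ => hPv i)
    have hPu : (∏ i, ‖u i‖) ≤ ∏ i, ‖v i‖ :=
      Finset.prod_le_prod (fun i _ => norm_nonneg _) (fun i _ => hUv i)
    have b1 : ‖(p' (j+1) - p (j+1)) (Fin.snoc w X')‖
        ≤ (‖p' (j+1) - p (j+1)‖ * ‖X'‖) * ∏ i, ‖v i‖ := by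
      refine ((p' (j+1) - p (j+1)).le_opNorm _).trans ?_
      rw [aux_prod_snoc]
      calc ‖p' (j+1) - p (j+1)‖ * ((∏ i, ‖w i‖) * ‖X'‖)
          ≤ ‖p' (j+1) - p (j+1)‖ * ((∏ i, ‖v i‖) * ‖X'‖) := by
            refine mul_le_mul_of_nonneg_left ?_ (norm_nonneg _)
            exact mul_le_mul_of_nonneg_right hPw (norm_nonneg _)
        _ = (‖p' (j+1) - p (j+1)‖ * ‖X'‖) * ∏ i, ‖v i‖ := by ring
    have b2 : ‖p (j+1) (Fin.snoc w (X' - X))‖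
        ≤ (‖p (j+1)‖ * ‖X' - X‖) * ∏ i, ‖v i‖ := by
      refine ((p (j+1)).le_opNorm _).trans ?_
      rw [aux_prod_snoc]
      calc ‖p (j+1)‖ * ((∏ i, ‖w i‖) * ‖X' - X‖)
          ≤ ‖p (j+1)‖ * ((∏ i, ‖v i‖) * ‖X' - X‖) := by
            refine mul_le_mul_of_nonneg_left ?_ (norm_nonneg _)
            exact mul_le_mul_of_nonneg_right hPw (norm_nonneg _)
        _ = (‖p (j+1)‖ * ‖X' - X‖) * ∏ i, ‖v i‖ := by ring
    have b3 : ‖(j:ℝ) • ((p' j - p j) u)‖ ≤ ((j:ℝ) * ‖p' j - p j‖) * ∏ i, ‖v i‖ := by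
      rw [norm_smul, Real.norm_natCast]
      rw [mul_assoc]
      refine mul_le_mul_of_nonneg_left ?_ (Nat.cast_nonneg j)
      refine ((p' j - p j).le_opNorm _).trans ?_
      exact mul_le_mul_of_nonneg_left hPu (norm_nonneg _)
    rw [e]
    have hn := norm_add_le ((p' (j+1) - p (j+1)) (Fin.snoc w X') + p (j+1) (Fin.snoc w (X' - X)))
      ((j:ℝ) • ((p' j - p j) u))
    have hn2 := norm_add_le ((p' (j+1) - p (j+1)) (Fin.snoc w X')) (p (j+1) (Fin.snoc w (X' - X)))
    have hr : (‖p' (j+1) - p (j+1)‖ * ‖X'‖ + ‖p (j+1)‖ * ‖X' - X‖ + (j:ℝ) * ‖p' j - p j‖)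
        * ∏ i, ‖v i‖
        = (‖p' (j+1) - p (j+1)‖ * ‖X'‖) * (∏ i, ‖v i‖)
          + (‖p (j+1)‖ * ‖X' - X‖) * (∏ i, ‖v i‖)
          + ((j:ℝ) * ‖p' j - p j‖) * ∏ i, ‖v i‖ := by ring
    linarith
  -- step 3 : sum manipulations
  have hre : ∀ f : ℕ → ℝ,
      ∑ j ∈ Finset.Icc 1 (k-1), f (j+1) = ∑ j ∈ Finset.Icc 2 k, f j := by
    intro f
    have h2 : Finset.Icc 2 k = (Finset.Icc 1 (k-1)).map (addRightEmbedding 1) := by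
      rw [Finset.map_add_right_Icc]
      congr 1
      omega
    rw [h2, Finset.sum_map]
    rfl
  have hmem1 : (1 : ℕ) ∈ Finset.Icc 1 k := Finset.mem_Icc.mpr ⟨le_refl 1, hk⟩
  have hsplitA : ∑ j ∈ Finset.Icc 1 k, ‖p' j - p j‖
      = ‖p' 1 - p 1‖ + ∑ j ∈ Finset.Icc 2 k, ‖p' j - p j‖ := by
    rw [← Finset.add_sum_erase _ _ hmem1, Finset.Icc_erase_left, ← Finset.Icc_add_one_left_eq_Ioc]
    rfl
  have hsplitB : ∑ j ∈ Finset.Icc 1 k, ‖p j‖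
      = ‖p 1‖ + ∑ j ∈ Finset.Icc 2 k, ‖p j‖ := by
    rw [← Finset.add_sum_erase _ _ hmem1, Finset.Icc_erase_left, ← Finset.Icc_add_one_left_eq_Ioc]
    rfl
  have hT : ∑ j ∈ Finset.Icc 1 (k-1), (‖ηH' j - ηH j‖ + ‖ηV' j - ηV j‖)
      ≤ (k:ℝ) * (∑ j ∈ Finset.Icc 1 k, ‖p' j - p j‖)
        + (∑ j ∈ Finset.Icc 2 k, ‖p' j - p j‖) * ‖X'‖
        + (∑ j ∈ Finset.Icc 2 k, ‖p j‖) * ‖X' - X‖ := by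
    have step : ∑ j ∈ Finset.Icc 1 (k-1), (‖ηH' j - ηH j‖ + ‖ηV' j - ηV j‖)
        ≤ ∑ j ∈ Finset.Icc 1 (k-1),
          ((1+(j:ℝ)) * ‖p' j - p j‖
            + (‖p' (j+1) - p (j+1)‖ * ‖X'‖ + ‖p (j+1)‖ * ‖X' - X‖)) := by
      refine Finset.sum_le_sum (fun j hj => ?_)
      have e1 := hHb j hj
      have e2 := hVb j hj
      have e3 : (1+(j:ℝ)) * ‖p' j - p j‖ = ‖p' j - p j‖ + (j:ℝ) * ‖p' j - p j‖ := by ring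
      linarith
    refine step.trans ?_
    rw [Finset.sum_add_distrib, Finset.sum_add_distrib, ← Finset.sum_mul, ← Finset.sum_mul,
      hre (fun j => ‖p' j - p j‖), hre (fun j => ‖p j‖)]
    have c1 : ∑ j ∈ Finset.Icc 1 (k-1), (1+(j:ℝ)) * ‖p' j - p j‖
        ≤ (k:ℝ) * ∑ j ∈ Finset.Icc 1 (k-1), ‖p' j - p j‖ := by
      rw [Finset.mul_sum]
      refine Finset.sum_le_sum (fun j hj => ?_)
      rw [Finset.mem_Icc] at hj
      have hnat : 1 + j ≤ k := by omega
      have hc : (1:ℝ) + (j:ℝ) ≤ (k:ℝ) := by exact_mod_cast hnat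
      exact mul_le_mul_of_nonneg_right hc (norm_nonneg _)
    have c2 : ∑ j ∈ Finset.Icc 1 (k-1), ‖p' j - p j‖
        ≤ ∑ j ∈ Finset.Icc 1 k, ‖p' j - p j‖ :=
      Finset.sum_le_sum_of_subset_of_nonneg
        (Finset.Icc_subset_Icc_right (Nat.sub_le k 1)) (fun _ _ _ => norm_nonneg _)
    have c3 : (k:ℝ) * ∑ j ∈ Finset.Icc 1 (k-1), ‖p' j - p j‖
        ≤ (k:ℝ) * ∑ j ∈ Finset.Icc 1 k, ‖p' j - p j‖ :=
      mul_le_mul_of_nonneg_left c2 (Nat.cast_nonneg k)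
    linarith
  -- step 4 : final arithmetic
  have hk1 : (1:ℝ) ≤ (k:ℝ) := by exact_mod_cast hk
  have nA : (0:ℝ) ≤ ∑ j ∈ Finset.Icc 1 k, ‖p' j - p j‖ :=
    Finset.sum_nonneg fun _ _ => norm_nonneg _
  have nB : (0:ℝ) ≤ ∑ j ∈ Finset.Icc 1 k, ‖p j‖ :=
    Finset.sum_nonneg fun _ _ => norm_nonneg _
  have ndx : (0:ℝ) ≤ ‖x' - x‖ := norm_nonneg _
  have ndX : (0:ℝ) ≤ ‖X' - X‖ := norm_nonneg _
  have ndy : (0:ℝ) ≤ ‖y' - y‖ := norm_nonneg _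
  have nx' : (0:ℝ) ≤ ‖x'‖ := norm_nonneg _
  have nX' : (0:ℝ) ≤ ‖X'‖ := norm_nonneg _
  have nx : (0:ℝ) ≤ ‖x‖ := norm_nonneg _
  have ny : (0:ℝ) ≤ ‖y‖ := norm_nonneg _
  have q1 : ‖y' - y‖ + (k:ℝ) * (∑ j ∈ Finset.Icc 1 k, ‖p' j - p j‖)
      ≤ (‖x' - x‖ + ‖y' - y‖ + ∑ j ∈ Finset.Icc 1 k, ‖p' j - p j‖) * (k:ℝ) := by
    have e : (‖x' - x‖ + ‖y' - y‖ + ∑ j ∈ Finset.Icc 1 k, ‖p' j - p j‖) * (k:ℝ)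
        = ‖x' - x‖ * (k:ℝ) + ‖y' - y‖ * (k:ℝ)
          + (k:ℝ) * (∑ j ∈ Finset.Icc 1 k, ‖p' j - p j‖) := by ring
    have e2 : ‖y' - y‖ ≤ ‖y' - y‖ * (k:ℝ) := le_mul_of_one_le_right ndy hk1
    have e3 : 0 ≤ ‖x' - x‖ * (k:ℝ) := mul_nonneg ndx (by linarith)
    linarith
  have q2 : ‖p' 1 - p 1‖ * ‖X'‖ + (∑ j ∈ Finset.Icc 2 k, ‖p' j - p j‖) * ‖X'‖
      ≤ (‖x' - x‖ + ‖y' - y‖ + ∑ j ∈ Finset.Icc 1 k, ‖p' j - p j‖) * (‖x'‖ + ‖X'‖) := by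
    have hAeq : ‖p' 1 - p 1‖ * ‖X'‖ + (∑ j ∈ Finset.Icc 2 k, ‖p' j - p j‖) * ‖X'‖
        = (∑ j ∈ Finset.Icc 1 k, ‖p' j - p j‖) * ‖X'‖ := by rw [hsplitA]; ring
    rw [hAeq]
    calc (∑ j ∈ Finset.Icc 1 k, ‖p' j - p j‖) * ‖X'‖
        ≤ (∑ j ∈ Finset.Icc 1 k, ‖p' j - p j‖) * (‖x'‖ + ‖X'‖) :=
          mul_le_mul_of_nonneg_left (by linarith) nA
      _ ≤ (‖x' - x‖ + ‖y' - y‖ + ∑ j ∈ Finset.Icc 1 k, ‖p' j - p j‖) * (‖x'‖ + ‖X'‖) :=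
          mul_le_mul_of_nonneg_right (by linarith) (by linarith)
  have q3 : ‖p 1‖ * ‖X' - X‖ + (∑ j ∈ Finset.Icc 2 k, ‖p j‖) * ‖X' - X‖
      ≤ (‖x' - x‖ + ‖X' - X‖) * (‖x‖ + ‖y‖ + ∑ j ∈ Finset.Icc 1 k, ‖p j‖) := by
    have hBeq : ‖p 1‖ * ‖X' - X‖ + (∑ j ∈ Finset.Icc 2 k, ‖p j‖) * ‖X' - X‖
        = (∑ j ∈ Finset.Icc 1 k, ‖p j‖) * ‖X' - X‖ := by rw [hsplitB]; ring
    rw [hBeq]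
    calc (∑ j ∈ Finset.Icc 1 k, ‖p j‖) * ‖X' - X‖
        ≤ (‖x‖ + ‖y‖ + ∑ j ∈ Finset.Icc 1 k, ‖p j‖) * ‖X' - X‖ :=
          mul_le_mul_of_nonneg_right (by linarith) ndX
      _ = ‖X' - X‖ * (‖x‖ + ‖y‖ + ∑ j ∈ Finset.Icc 1 k, ‖p j‖) := by ring
      _ ≤ (‖x' - x‖ + ‖X' - X‖) * (‖x‖ + ‖y‖ + ∑ j ∈ Finset.Icc 1 k, ‖p j‖) :=
          mul_le_mul_of_nonneg_right (by linarith) (by linarith)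
  have expand1 : (‖x' - x‖ + ‖y' - y‖ + ∑ j ∈ Finset.Icc 1 k, ‖p' j - p j‖)
        * ((k:ℝ) + (‖x'‖ + ‖X'‖))
      = (‖x' - x‖ + ‖y' - y‖ + ∑ j ∈ Finset.Icc 1 k, ‖p' j - p j‖) * (k:ℝ)
        + (‖x' - x‖ + ‖y' - y‖ + ∑ j ∈ Finset.Icc 1 k, ‖p' j - p j‖) * (‖x'‖ + ‖X'‖) := by
    ring
  have expand2 : (‖x' - x‖ + ‖X' - X‖) * (1 + (‖x‖ + ‖y‖ + ∑ j ∈ Finset.Icc 1 k, ‖p j‖))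
      = (‖x' - x‖ + ‖X' - X‖)
        + (‖x' - x‖ + ‖X' - X‖) * (‖x‖ + ‖y‖ + ∑ j ∈ Finset.Icc 1 k, ‖p j‖) := by
    ring
  linarith
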